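/- Define δ : ℕ → ℝ by δ n = 1, δ k = ((n-k)/k) * δ (k+1) + 1 for 2 ≤ k ≤ n-1, and δ 1 = (1/2) * ((n-1) * δ 2 + 1). Then there exists a constant c > 0 such that for all n ≥ 2, max {δ k : 1 ≤ k ≤ n} ≤ c * sqrt(n) * 2^n. -/

import Mathlib

theorem stmt_3 :
    ∃ c : ℝ, 0 < c ∧ ∀ n : ℕ, 2 ≤ n → ∀ δ : ℕ → ℝ,
      δ n = 1 →
      (∀ k, 2 ≤ k → k ≤ n - 1 → δ k = (((n : ℝ) - k) / k) * δ (k + 1) + 1) →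
      δ 1 = (((n : ℝ) - 1) * δ 2 + 1) / 2 →
      ∀ k, 1 ≤ k → k ≤ n → δ k ≤ c * Real.sqrt n * 2 ^ n := by
  refine ⟨1, one_pos, ?_⟩
  intro n hn δ hδn hrec hδ1 k hk1 hkn
  -- the target bound
  have hsqrt : (1 : ℝ) ≤ Real.sqrt n := by
    rw [show (1:ℝ) = Real.sqrt 1 by simp]
    exact Real.sqrt_le_sqrt (by exact_mod_cast Nat.one_le_of_lt hn)
  have hRHS : (2:ℝ) ^ (n-1) ≤ 1 * Real.sqrt n * 2 ^ n := by
    have h1 : (2:ℝ) ^ (n-1) ≤ 2 ^ n := by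
      apply pow_le_pow_right₀ (by norm_num) (Nat.sub_le n 1)
    calc (2:ℝ)^(n-1) ≤ 2^n := h1
      _ = 1 * 1 * 2^n := by ring
      _ ≤ 1 * Real.sqrt n * 2^n := by
          apply mul_le_mul_of_nonneg_right _ (by positivity)
          simpa using hsqrt
  -- sum bound
  have Sbound : ∀ a : ℕ, (∑ j ∈ Finset.Icc a (n-1), (n-1).choose j) ≤ 2^(n-1) := by
    intro a
    calc (∑ j ∈ Finset.Icc a (n-1), (n-1).choose j)
        ≤ ∑ j ∈ Finset.range n, (n-1).choose j := by
          apply Finset.sum_le_sum_of_subset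
          intro x hx
          simp only [Finset.mem_Icc, Finset.mem_range] at *
          omega
      _ = 2^(n-1) := by
          have := Nat.sum_range_choose (n-1)
          rwa [show n - 1 + 1 = n by omega] at this
  -- key inductive claim
  have key : ∀ m : ℕ, ∀ k : ℕ, 2 ≤ k → k ≤ n → n - k = m →
      ((n-1).choose (k-1) : ℝ) * δ k ≤
        ((∑ j ∈ Finset.Icc (k-1) (n-1), (n-1).choose j : ℕ) : ℝ) := by
    intro m
    induction m with
    | zero =>
        intro k hk2 hkn hm
        have hk : k = n := by omega
        subst hk
        rw [hδn]
        have : Finset.Icc (k-1) (k-1) = {k-1} := Finset.Icc_self _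
        rw [this]
        simp
    | succ m ih =>
        intro k hk2 hkn hm
        have hklt : k ≤ n - 1 := by omega
        have hrk := hrec k hk2 hklt
        have ihk := ih (k+1) (by omega) (by omega) (by omega)
        have hsplit : (∑ j ∈ Finset.Icc (k-1) (n-1), (n-1).choose j)
            = (n-1).choose (k-1) + ∑ j ∈ Finset.Icc k (n-1), (n-1).choose j := by
          have : Finset.Icc (k-1) (n-1) = insert (k-1) (Finset.Icc k (n-1)) := by
            ext x; simp only [Finset.mem_Icc, Finset.mem_insert]; omega
          rw [this, Finset.sum_insert (by simp only [Finset.mem_Icc]; omega)]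
        -- choose identity
        have hid : ((n-1).choose (k-1) : ℝ) * (((n:ℝ) - k) / k) = (n-1).choose k := by
          have hnat : (n-1).choose k * k = (n-1).choose (k-1) * (n - k) := by
            have := Nat.choose_succ_right_eq (n-1) (k-1)
            rw [show k - 1 + 1 = k by omega, show n - 1 - (k-1) = n - k by omega] at this
            exact this
          have hkpos : (0:ℝ) < k := by exact_mod_cast (by omega : 0 < k)
          have hcast : ((n:ℝ) - k) = ((n - k : ℕ) : ℝ) := by
            rw [Nat.cast_sub (by omega)]
          rw [hcast]
          field_simp
          exact_mod_cast (hnat.symm.trans (Nat.mul_comm _ _))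
        rw [hrk, hsplit]
        push_cast
        have : ((n-1).choose (k-1) : ℝ) * ((((n:ℝ) - k) / k) * δ (k+1) + 1)
            = ((n-1).choose k : ℝ) * δ (k+1) + (n-1).choose (k-1) := by
          rw [mul_add, ← mul_assoc, hid]; ring
        rw [this]
        have : ((n-1).choose k : ℝ) * δ (k+1)
            ≤ ((∑ j ∈ Finset.Icc k (n-1), (n-1).choose j : ℕ) : ℝ) := by
          have h := ihk
          rwa [show k + 1 - 1 = k by omega] at h
        push_cast at this
        linarith
  -- now conclude
  rcases le_or_gt (δ k) 0 with hneg | hpos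
  · linarith [hRHS, pow_pos (by norm_num : (0:ℝ) < 2) (n-1)]
  rcases Nat.lt_or_ge k 2 with hk | hk
  · -- k = 1
    have hk1' : k = 1 := by omega
    subst hk1'
    have h2 := key (n-2) 2 le_rfl hn (by omega)
    have hS := Sbound 1
    have hchoose : (n-1).choose 1 = n - 1 := Nat.choose_one_right _
    have hδ2 : ((n:ℝ) - 1) * δ 2 ≤ (2:ℝ)^(n-1) := by
      have hcast : ((n:ℝ) - 1) = ((n-1 : ℕ) : ℝ) := by
        rw [Nat.cast_sub (by omega)]; norm_num
      rw [hcast]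
      calc ((n-1:ℕ):ℝ) * δ 2 = ((n-1).choose 1 : ℝ) * δ 2 := by rw [hchoose]
        _ ≤ ((∑ j ∈ Finset.Icc 1 (n-1), (n-1).choose j : ℕ) : ℝ) := by
            simpa using h2
        _ ≤ ((2^(n-1) : ℕ) : ℝ) := by exact_mod_cast hS
        _ = (2:ℝ)^(n-1) := by push_cast; ring
    have h1le : (1:ℝ) ≤ (2:ℝ)^(n-1) := by
      calc (1:ℝ) = 2^0 := by norm_num
        _ ≤ 2^(n-1) := pow_le_pow_right₀ one_le_two (Nat.zero_le _)
    rw [hδ1]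
    linarith
  · -- k ≥ 2
    have hkey := key (n-k) k hk hkn rfl
    have hS := Sbound (k-1)
    have hcpos : 1 ≤ (n-1).choose (k-1) := Nat.choose_pos (by omega)
    have hle : δ k ≤ ((n-1).choose (k-1) : ℝ) * δ k := by
      have : (1:ℝ) ≤ ((n-1).choose (k-1) : ℝ) := by exact_mod_cast hcpos
      nlinarith
    have : δ k ≤ (2:ℝ)^(n-1) := by
      calc δ k ≤ ((n-1).choose (k-1) : ℝ) * δ k := hle
        _ ≤ ((∑ j ∈ Finset.Icc (k-1) (n-1), (n-1).choose j : ℕ) : ℝ) := hkey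
        _ ≤ ((2^(n-1):ℕ):ℝ) := by exact_mod_cast hS
        _ = (2:ℝ)^(n-1) := by push_cast; ring
    linarith
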